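/- For every d ≥ 1 and every pair (n_A, n_B) of positive integers with n_A ≤ d, n_B ≤ d, and n_A + n_B ≥ d + 1, there exists a nonzero vector ψ ∈ C^d with exactly n_A nonzero standard-basis coordinates and exactly n_B nonzero Fourier coefficients. -/

import Mathlib

open Polynomial

open Complex Finset
open scoped Classical

noncomputable def dftOmega (d : ℕ) : ℂ := Complex.exp (2 * Real.pi * Complex.I / d)

/-- The j-th Fourier basis vector of `ℂ^d`, with i-th entry `ω^{ij}/√d`. -/
noncomputable def fourierVec (d : ℕ) (j : Fin d) : Fin d → ℂ :=
  fun i => dftOmega d ^ ((i : ℕ) * (j : ℕ)) / Real.sqrt d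

/-- The j-th Fourier coefficient `⟨f_j, ψ⟩ = (1/√d)∑_i ω^{−ij} ψ(i)`. -/
noncomputable def dftCoeff (d : ℕ) (ψ : Fin d → ℂ) (j : Fin d) : ℂ :=
  ∑ i, (starRingEnd ℂ) (fourierVec d j i) * ψ i

/-- Number of nonzero standard-basis coordinates of ψ. -/
noncomputable def nA (d : ℕ) (ψ : Fin d → ℂ) : ℕ :=
  (Finset.univ.filter fun i => ψ i ≠ 0).card

/-- Number of nonzero Fourier coefficients of ψ. -/
noncomputable def nB (d : ℕ) (ψ : Fin d → ℂ) : ℕ :=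
  (Finset.univ.filter fun j => dftCoeff d ψ j ≠ 0).card

/-- Kirkwood-Dirac distribution `Q_{ij} = ⟨e_i,ψ⟩⟨ψ,f_j⟩⟨f_j,e_i⟩` of ψ with
respect to the standard basis and the Fourier basis. -/
noncomputable def KD (d : ℕ) (ψ : Fin d → ℂ) (i j : Fin d) : ℂ :=
  ψ i * (∑ k, (starRingEnd ℂ) (ψ k) * fourierVec d j k) * (starRingEnd ℂ) (fourierVec d j i)

noncomputable def qpoly (ω : ℂ) (m : ℕ) : Polynomial ℂ :=
  ∏ k ∈ Finset.range m, (X - C (ω ^ (k + 1)))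

lemma qpoly_monic (ω : ℂ) (m : ℕ) : (qpoly ω m).Monic :=
  monic_prod_of_monic _ _ fun _ _ => monic_X_sub_C _

lemma qpoly_natDegree (ω : ℂ) (m : ℕ) : (qpoly ω m).natDegree = m := by
  rw [qpoly, natDegree_prod_of_monic _ _ fun _ _ => monic_X_sub_C _]
  simp only [natDegree_X_sub_C]
  simp

lemma coeff_comp_C_mul_X (p : Polynomial ℂ) (a : ℂ) (n : ℕ) :
    (p.comp (C a * X)).coeff n = p.coeff n * a ^ n := by
  induction p using Polynomial.induction_on' with
  | add p q hp hq => simp [add_comp, hp, hq, add_mul]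
  | monomial k b =>
    rw [monomial_comp, mul_pow, ← C_pow, ← mul_assoc, ← C_mul, C_mul_X_pow_eq_monomial]
    simp only [coeff_monomial]
    rcases eq_or_ne k n with rfl | hk
    · simp
    · simp [hk, Ne.symm hk]

lemma qpoly_funcEq (ω : ℂ) (m : ℕ) :
    (X - C (ω ^ m)) * ((qpoly ω m).comp (C ω * X)) =
      C (ω ^ m) * ((X - C 1) * qpoly ω m) := by
  have h1 : ∀ k : ℕ, (X - C (ω ^ (k + 1))).comp (C ω * X) = C ω * (X - C (ω ^ k)) := by
    intro k
    rw [sub_comp, X_comp, C_comp, mul_sub, ← C_mul, ← pow_succ']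
  have key : (X - C (ω ^ m)) * ∏ k ∈ range m, (X - C (ω ^ k))
      = (X - C 1) * ∏ k ∈ range m, (X - C (ω ^ (k + 1))) := by
    rw [mul_comm, ← Finset.prod_range_succ (fun k => X - C (ω ^ k)) m,
      Finset.prod_range_succ' (fun k => X - C (ω ^ k)) m, mul_comm, pow_zero]
  rw [qpoly, Polynomial.prod_comp]
  simp_rw [h1]
  rw [prod_mul_distrib, prod_const, card_range, ← C_pow, mul_left_comm, key]

lemma qpoly_coeff_rec (ω : ℂ) (m n : ℕ) :
    ω ^ n * (qpoly ω m).coeff n - ω ^ m * (ω ^ (n + 1) * (qpoly ω m).coeff (n + 1))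
      = ω ^ m * ((qpoly ω m).coeff n - (qpoly ω m).coeff (n + 1)) := by
  have h := congrArg (fun p => Polynomial.coeff p (n + 1)) (qpoly_funcEq ω m)
  simp only [sub_mul, coeff_sub, coeff_X_mul, coeff_C_mul, coeff_comp_C_mul_X, mul_sub] at h
  linear_combination h

lemma qpoly_coeff_ne_zero {d : ℕ} {ω : ℂ} (hω : IsPrimitiveRoot ω d) {m : ℕ} (hm : m < d) :
    ∀ n, n ≤ m → (qpoly ω m).coeff n ≠ 0 := by
  have hd : d ≠ 0 := by omega
  have hω0 : ω ≠ 0 := hω.ne_zero hd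
  intro n
  induction n with
  | zero =>
    intro _
    rw [coeff_zero_eq_eval_zero, qpoly, eval_prod]
    simp only [eval_sub, eval_X, eval_C, zero_sub]
    exact prod_ne_zero_iff.mpr fun k _ => neg_ne_zero.mpr (pow_ne_zero _ hω0)
  | succ n ih =>
    intro hsn
    have hnm : n < m := Nat.lt_of_succ_le hsn
    have hcn : (qpoly ω m).coeff n ≠ 0 := ih hnm.le
    have key : (qpoly ω m).coeff (n + 1) * (ω ^ m * (1 - ω ^ (n + 1)))
        = (qpoly ω m).coeff n * (ω ^ m - ω ^ n) := by
      linear_combination qpoly_coeff_rec ω m n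
    have hne : ω ^ m - ω ^ n ≠ 0 := by
      refine sub_ne_zero.mpr fun hEq => ?_
      exact absurd (hω.pow_inj hm (lt_trans hnm hm) hEq) hnm.ne'
    have hR : (qpoly ω m).coeff n * (ω ^ m - ω ^ n) ≠ 0 := mul_ne_zero hcn hne
    intro h0
    rw [h0, zero_mul] at key
    exact hR key.symm

noncomputable def Spoly (c : ℂ) (a' : ℕ) : Polynomial ℂ :=
  ∑ l ∈ Finset.range a', C (c ^ l) * X ^ l

lemma Spoly_coeff (c : ℂ) (a' k : ℕ) :
    (Spoly c a').coeff k = if k < a' then c ^ k else 0 := by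
  rw [Spoly, finset_sum_coeff]
  simp only [coeff_C_mul, coeff_X_pow, mul_ite, mul_one, mul_zero]
  rw [Finset.sum_ite_eq (Finset.range a') k (fun l => c ^ l)]
  simp [Finset.mem_range]

lemma Spoly_natDegree_le (c : ℂ) (a' : ℕ) (ha : 1 ≤ a') :
    (Spoly c a').natDegree ≤ a' - 1 := by
  refine natDegree_sum_le_of_forall_le _ _ fun l hl => ?_
  simp only [Finset.mem_range] at hl
  exact le_trans (natDegree_C_mul_X_pow_le _ _) (by omega)

lemma Spoly_eval_symm (c z : ℂ) (a' : ℕ) :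
    (Spoly c a').eval z = (Spoly z a').eval c := by
  simp [Spoly, eval_finset_sum, mul_comm]

lemma Spoly_ne_zero (c : ℂ) (a' : ℕ) (ha : 1 ≤ a') : Spoly c a' ≠ 0 := by
  intro h0
  have := Spoly_coeff c a' 0
  rw [h0] at this
  rw [if_pos (by omega : (0:ℕ) < a')] at this
  simp at this

noncomputable def Fpoly (q : Polynomial ℂ) (a' n : ℕ) : Polynomial ℂ :=
  ∑ i ∈ (Finset.range (n + 1)).filter (fun i => n - i < a'), C (q.coeff i) * X ^ (n - i)

lemma Fpoly_coeff (q : Polynomial ℂ) (a' n i₀ : ℕ) (h0 : i₀ ≤ n) (h1 : n - i₀ < a') :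
    (Fpoly q a' n).coeff (n - i₀) = q.coeff i₀ := by
  rw [Fpoly, finset_sum_coeff]
  rw [Finset.sum_eq_single i₀]
  · simp [coeff_C_mul, coeff_X_pow]
  · intro b hb hne
    simp only [Finset.mem_filter, Finset.mem_range] at hb
    simp only [coeff_C_mul, coeff_X_pow]
    have : ¬ (n - i₀ = n - b) := by omega
    simp [this]
  · intro hmem
    exfalso
    apply hmem
    simp only [Finset.mem_filter, Finset.mem_range]
    omega

lemma coeff_mul_Spoly (q : Polynomial ℂ) (a' n : ℕ) (t : ℂ) :
    (q * Spoly t a').coeff n = (Fpoly q a' n).eval t := by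
  rw [coeff_mul, Finset.Nat.sum_antidiagonal_eq_sum_range_succ (fun i j => q.coeff i * (Spoly t a').coeff j)]
  simp only [Spoly_coeff, mul_ite, mul_zero]
  rw [Fpoly, eval_finset_sum]
  rw [Finset.sum_filter]
  simp [eval_C, eval_pow, eval_X]

lemma card_filter_val_lt (d a : ℕ) (ha : a ≤ d) :
    ((Finset.univ.filter fun i : Fin d => (i : ℕ) < a)).card = a := by
  have h : ∀ x ∈ Finset.range a, x < d := fun x hx =>
    lt_of_lt_of_le (Finset.mem_range.1 hx) ha
  have hset : (Finset.univ.filter fun i : Fin d => (i : ℕ) < a)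
      = (Finset.range a).attachFin h := by
    ext i
    simp [Finset.mem_attachFin, Finset.mem_range]
  rw [hset, Finset.card_attachFin, Finset.card_range]

lemma conj_dftOmega (d : ℕ) : (starRingEnd ℂ) (dftOmega d) = (dftOmega d)⁻¹ := by
  have h1 : (starRingEnd ℂ) (dftOmega d) * dftOmega d = 1 := by
    rw [dftOmega, ← Complex.exp_conj, ← Complex.exp_add]
    have h2 : (starRingEnd ℂ) (2 * (Real.pi : ℂ) * Complex.I / d)
        + 2 * (Real.pi : ℂ) * Complex.I / d = 0 := by
      simp only [map_div₀, map_mul, Complex.conj_I, map_ofNat, Complex.conj_ofReal,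
        Complex.conj_natCast]
      ring
    rw [h2, Complex.exp_zero]
  exact eq_inv_of_mul_eq_one_left h1

/-- Corollary 1: every point `(n_A, n_B)` with `n_A + n_B ≥ d + 1` lies in the
uncertainty diagram of the DFT. -/
theorem no_holes_above_line (d nA' nB' : ℕ) (hd : 1 ≤ d)
    (h1 : 1 ≤ nA') (h2 : nA' ≤ d) (h3 : 1 ≤ nB') (h4 : nB' ≤ d)
    (h : d + 1 ≤ nA' + nB') :
    ∃ ψ : Fin d → ℂ, ψ ≠ 0 ∧ nA d ψ = nA' ∧ nB d ψ = nB' := by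
  have hd0 : d ≠ 0 := by omega
  set ω := dftOmega d with hωdef
  have hω : IsPrimitiveRoot ω d := Complex.isPrimitiveRoot_exp d hd0
  set m := d - nB' with hmdef
  set a := nA' with hadef
  have hmd : m < d := by omega
  have hma : m + 1 ≤ a := by omega
  set a' := a - m with ha'def
  have ha1 : 1 ≤ a' := by omega
  set q := qpoly ω m with hqdef
  set ζ : Fin d → ℂ := fun j => (ω⁻¹) ^ (j : ℕ) with hζdef
  -- the F polynomials are nonzero
  have hFne : ∀ n ∈ Finset.range a, Fpoly q a' n ≠ 0 := by
    intro n hn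
    rw [Finset.mem_range] at hn
    have h0 : min n m ≤ n := min_le_left _ _
    have h1' : n - min n m < a' := by omega
    have hc := Fpoly_coeff q a' n (min n m) h0 h1'
    intro hF0
    rw [hF0, Polynomial.coeff_zero] at hc
    exact qpoly_coeff_ne_zero hω hmd (min n m) (min_le_right _ _) hc.symm
  have hSne : ∀ j : Fin d, Spoly (ζ j) a' ≠ 0 := fun j => Spoly_ne_zero _ _ ha1
  -- choose a generic t
  set G := (∏ n ∈ Finset.range a, Fpoly q a' n) * ∏ j : Fin d, Spoly (ζ j) a' with hGdef
  have hG : G ≠ 0 := mul_ne_zero (Finset.prod_ne_zero_iff.mpr hFne)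
    (Finset.prod_ne_zero_iff.mpr fun j _ => hSne j)
  obtain ⟨t, ht⟩ := G.exists_eval_ne_zero_of_natDegree_lt_card hG
    (lt_of_lt_of_le (Cardinal.nat_lt_aleph0 _) (Cardinal.aleph0_le_mk ℂ))
  rw [hGdef, Polynomial.eval_mul, Polynomial.eval_prod, Polynomial.eval_prod] at ht
  have hFt : ∀ n ∈ Finset.range a, (Fpoly q a' n).eval t ≠ 0 :=
    Finset.prod_ne_zero_iff.mp (left_ne_zero_of_mul ht)
  have hSt : ∀ j : Fin d, (Spoly (ζ j) a').eval t ≠ 0 := fun j =>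
    Finset.prod_ne_zero_iff.mp (right_ne_zero_of_mul ht) j (Finset.mem_univ j)
  set P := q * Spoly t a' with hPdef
  have hPdeg : P.natDegree ≤ a - 1 := by
    refine le_trans Polynomial.natDegree_mul_le ?_
    have hs := Spoly_natDegree_le t a' ha1
    rw [hqdef, qpoly_natDegree]
    omega
  set ψ : Fin d → ℂ := fun i => P.coeff (i : ℕ) with hψdef
  have hψlt : ∀ i : Fin d, (i : ℕ) < a → ψ i ≠ 0 := by
    intro i hi
    show P.coeff (i : ℕ) ≠ 0
    rw [hPdef, coeff_mul_Spoly]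
    exact hFt _ (Finset.mem_range.mpr hi)
  have hψge : ∀ i : Fin d, a ≤ (i : ℕ) → ψ i = 0 := fun i hi =>
    Polynomial.coeff_eq_zero_of_natDegree_lt (by omega)
  -- the DFT is evaluation at ζ j
  have hconj : (starRingEnd ℂ) ω = ω⁻¹ := conj_dftOmega d
  have hsq : (0 : ℝ) < Real.sqrt d := Real.sqrt_pos.mpr (by positivity)
  have hsqrt : ((Real.sqrt d : ℝ) : ℂ) ≠ 0 := Complex.ofReal_ne_zero.mpr hsq.ne'
  have hdft : ∀ j : Fin d, dftCoeff d ψ j = P.eval (ζ j) / ((Real.sqrt d : ℝ) : ℂ) := by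
    intro j
    rw [dftCoeff]
    have hterm : ∀ i : Fin d, (starRingEnd ℂ) (fourierVec d j i) * ψ i
        = (P.coeff (i : ℕ) * (ζ j) ^ (i : ℕ)) / ((Real.sqrt d : ℝ) : ℂ) := by
      intro i
      rw [fourierVec]
      rw [map_div₀, map_pow, hconj, Complex.conj_ofReal]
      rw [mul_comm (i : ℕ) (j : ℕ), pow_mul]
      show ((ω⁻¹) ^ (j : ℕ)) ^ (i : ℕ) / _ * P.coeff (i : ℕ) = _
      rw [hζdef]
      ring
    rw [Finset.sum_congr rfl fun i _ => hterm i, ← Finset.sum_div]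
    congr 1
    rw [Polynomial.eval_eq_sum_range' (lt_of_le_of_lt hPdeg (by omega : a - 1 < d)) (ζ j)]
    exact Fin.sum_univ_eq_sum_range (fun i => P.coeff i * (ζ j) ^ i) d
  -- when ζ j hits a root of q
  have hzeta : ∀ (j : Fin d) (k : ℕ), k < m → (ζ j = ω ^ (k + 1) ↔ (j : ℕ) + k + 1 = d) := by
    intro j k hk
    have hω0 : ω ≠ 0 := hω.ne_zero hd0
    have hωj : ω ^ (j : ℕ) ≠ 0 := pow_ne_zero _ hω0
    have hζj : ω ^ (j : ℕ) * ζ j = 1 := by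
      show ω ^ (j : ℕ) * ω⁻¹ ^ (j : ℕ) = 1
      rw [inv_pow, mul_inv_cancel₀ hωj]
    have hjlt := j.isLt
    constructor
    · intro hEq
      have hpow : ω ^ ((j : ℕ) + (k + 1)) = 1 := by
        rw [pow_add, ← hEq, hζj]
      obtain ⟨c, hc⟩ := (hω.pow_eq_one_iff_dvd _).1 hpow
      have hcu : d * c < d * 2 := by omega
      have hc2 : c < 2 := lt_of_mul_lt_mul_left hcu (Nat.zero_le d)
      have hc0 : c ≠ 0 := by rintro rfl; omega
      interval_cases c <;> omega
    · intro hEq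
      have hpow : ω ^ (j : ℕ) * ω ^ (k + 1) = 1 := by
        rw [← pow_add, show (j : ℕ) + (k + 1) = d by omega]
        exact hω.pow_eq_one
      have hinv := inv_eq_of_mul_eq_one_right hpow
      show ω⁻¹ ^ (j : ℕ) = ω ^ (k + 1)
      rw [inv_pow, hinv]
  have hqz : ∀ j : Fin d, (q.eval (ζ j) = 0 ↔ d - m ≤ (j : ℕ)) := by
    intro j
    have hjlt := j.isLt
    rw [hqdef, qpoly, Polynomial.eval_prod, Finset.prod_eq_zero_iff]
    simp only [Polynomial.eval_sub, Polynomial.eval_X, Polynomial.eval_C, sub_eq_zero,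
      Finset.mem_range]
    constructor
    · rintro ⟨k, hk, hEq⟩
      have := (hzeta j k hk).1 hEq
      omega
    · intro hj
      exact ⟨d - 1 - (j : ℕ), by omega, (hzeta j _ (by omega)).2 (by omega)⟩
  have hdft_ne : ∀ j : Fin d, (dftCoeff d ψ j ≠ 0 ↔ (j : ℕ) < d - m) := by
    intro j
    rw [hdft j, div_ne_zero_iff]
    have hPe : P.eval (ζ j) = q.eval (ζ j) * (Spoly (ζ j) a').eval t := by
      rw [hPdef, Polynomial.eval_mul, Spoly_eval_symm]
    rw [hPe]
    constructor
    · rintro ⟨hne, -⟩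
      have hq0 : q.eval (ζ j) ≠ 0 := left_ne_zero_of_mul hne
      have := (not_iff_not.mpr (hqz j)).1 hq0
      omega
    · intro hj
      refine ⟨mul_ne_zero ?_ (hSt j), hsqrt⟩
      intro h0
      have := (hqz j).1 h0
      omega
  refine ⟨ψ, ?_, ?_, ?_⟩
  · intro h0
    have hz : ψ ⟨0, by omega⟩ = 0 := by rw [h0]; rfl
    exact hψlt ⟨0, by omega⟩ (by omega : (0 : ℕ) < a) hz
  · unfold nA
    have hfe : (Finset.univ.filter fun i : Fin d => ψ i ≠ 0)
        = Finset.univ.filter fun i : Fin d => (i : ℕ) < a := by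
      ext i
      simp only [Finset.mem_filter, Finset.mem_univ, true_and]
      constructor
      · intro hne
        by_contra hlt
        exact hne (hψge i (not_lt.1 hlt))
      · exact hψlt i
    rw [hfe, card_filter_val_lt d a h2]
  · unfold nB
    have hfe : (Finset.univ.filter fun j : Fin d => dftCoeff d ψ j ≠ 0)
        = Finset.univ.filter fun j : Fin d => (j : ℕ) < d - m := by
      ext j
      simp only [Finset.mem_filter, Finset.mem_univ, true_and]
      exact hdft_ne j
    rw [hfe, card_filter_val_lt d (d - m) (by omega)]
    omega
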